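/- Let p < r and let α_1, …, α_p ∈ ℕ^r be linearly independent over ℚ. For every a ∈ (0,∞)^r, the fibre F = {u ∈ (0,∞)^r : u^{α_j} = a^{α_j} for all j = 1, …, p} of the positive monomial map through a is connected and unbounded (and contains a). -/

import Mathlib

/-- The fibre through `a ∈ (0,∞)^r` of the positive monomial map `u ↦ (u^{α_1},…,u^{α_p})`,
with `p < r` and `α_1,…,α_p` linearly independent over `ℚ`, contains `a`, is connected,
and is unbounded. -/
theorem monomial_fibre_connected_unbounded (p r : ℕ) (hpr : p < r)
    (α : Fin p → Fin r → ℕ)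
    (hα : LinearIndependent ℚ fun j : Fin p => fun i : Fin r => (α j i : ℚ))
    (a : Fin r → ℝ) (ha : ∀ i, 0 < a i) :
    a ∈ {u : Fin r → ℝ | (∀ i, 0 < u i) ∧
        ∀ j : Fin p, (∏ i, u i ^ α j i) = ∏ i, a i ^ α j i} ∧
    IsConnected {u : Fin r → ℝ | (∀ i, 0 < u i) ∧
        ∀ j : Fin p, (∏ i, u i ^ α j i) = ∏ i, a i ^ α j i} ∧
    ¬ Bornology.IsBounded {u : Fin r → ℝ | (∀ i, 0 < u i) ∧
        ∀ j : Fin p, (∏ i, u i ^ α j i) = ∏ i, a i ^ α j i} := by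
  classical
  set S := {u : Fin r → ℝ | (∀ i, 0 < u i) ∧
      ∀ j : Fin p, (∏ i, u i ^ α j i) = ∏ i, a i ^ α j i} with hSdef
  set L : (Fin r → ℝ) →ₗ[ℝ] (Fin p → ℝ) :=
    (Matrix.of fun j i => (α j i : ℝ)).mulVecLin with hLdef
  have hLapp : ∀ (v : Fin r → ℝ) (j : Fin p), L v j = ∑ i, (α j i : ℝ) * v i := by
    intro v j
    simp [hLdef, Matrix.mulVecLin, Matrix.mulVec, dotProduct]
  set φ : (Fin r → ℝ) → (Fin r → ℝ) := fun v i => a i * Real.exp (v i) with hφdef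
  have hφcont : Continuous φ :=
    continuous_pi fun i => continuous_const.mul (Real.continuous_exp.comp (continuous_apply i))
  have himg : φ '' (LinearMap.ker L : Set (Fin r → ℝ)) = S := by
    ext u
    constructor
    · rintro ⟨v, hv, rfl⟩
      refine ⟨fun i => mul_pos (ha i) (Real.exp_pos _), fun j => ?_⟩
      have hv' : ∑ i, (α j i : ℝ) * v i = 0 := by
        have hz : L v = 0 := LinearMap.mem_ker.mp hv
        rw [← hLapp, hz]; rfl
      calc ∏ i, (φ v) i ^ α j i
          = (∏ i, a i ^ α j i) * ∏ i, Real.exp ((α j i : ℝ) * v i) := by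
            rw [← Finset.prod_mul_distrib]
            exact Finset.prod_congr rfl fun i _ => by
              rw [hφdef, mul_pow, Real.exp_nat_mul]
        _ = (∏ i, a i ^ α j i) * Real.exp (∑ i, (α j i : ℝ) * v i) := by
            rw [Real.exp_sum]
        _ = ∏ i, a i ^ α j i := by rw [hv', Real.exp_zero, mul_one]
    · rintro ⟨hupos, huprod⟩
      refine ⟨fun i => Real.log (u i) - Real.log (a i), ?_, ?_⟩
      · rw [SetLike.mem_coe, LinearMap.mem_ker]
        funext j
        have key : ∑ i, (α j i : ℝ) * Real.log (u i)
            = ∑ i, (α j i : ℝ) * Real.log (a i) := by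
          have h := congrArg Real.log (huprod j)
          rw [Real.log_prod (fun i _ => pow_ne_zero _ (hupos i).ne'),
            Real.log_prod (fun i _ => pow_ne_zero _ (ha i).ne')] at h
          simpa only [Real.log_pow] using h
        show L _ j = 0
        rw [hLapp]
        simp only [mul_sub, Finset.sum_sub_distrib]
        rw [key, sub_self]
      · funext i
        simp only [hφdef, Real.exp_sub, Real.exp_log (hupos i), Real.exp_log (ha i)]
        rw [mul_comm, div_mul_cancel₀ _ (ha i).ne']
  have haS : a ∈ S := ⟨ha, fun j => rfl⟩
  refine ⟨haS, ?_, ?_⟩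
  · rw [← himg]
    exact ((Submodule.convex _).isConnected ⟨0, Submodule.zero_mem _⟩).image _ hφcont.continuousOn
  · -- unboundedness
    obtain ⟨w, hw, hw0⟩ : ∃ w : Fin r → ℝ, w ∈ LinearMap.ker L ∧ w ≠ 0 := by
      by_contra h
      push_neg at h
      have hinj : Function.Injective L := by
        rw [← LinearMap.ker_eq_bot, Submodule.eq_bot_iff]
        intro x hx
        exact h x hx
      have hle := LinearMap.finrank_le_finrank_of_injective hinj
      simp [Module.finrank_pi] at hle
      omega
    obtain ⟨i0, hi0⟩ : ∃ i0, w i0 ≠ 0 := by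
      by_contra h
      push_neg at h
      exact hw0 (funext h)
    set w' : Fin r → ℝ := if 0 < w i0 then w else -w with hw'def
    have hw'mem : w' ∈ LinearMap.ker L := by
      rw [hw'def]; split
      · exact hw
      · exact Submodule.neg_mem _ hw
    have hw'pos : 0 < w' i0 := by
      rw [hw'def]; split
      · assumption
      · next h => simpa using lt_of_le_of_ne (not_lt.mp h) hi0
    intro hbd
    rw [isBounded_iff_forall_norm_le] at hbd
    obtain ⟨C, hC⟩ := hbd
    have hC0 : 0 < C := lt_of_lt_of_le (ha i0) (le_trans (le_abs_self _)
      (le_trans (le_of_eq (Real.norm_eq_abs _).symm)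
        (le_trans (norm_le_pi_norm a i0) (hC a haS))))
    set t : ℝ := (Real.log (C / a i0) + 1) / w' i0 with htdef
    have hmem : φ (t • w') ∈ S := by
      rw [← himg]
      exact ⟨t • w', Submodule.smul_mem _ _ hw'mem, rfl⟩
    have hub := le_trans (le_trans (le_abs_self (φ (t • w') i0))
      (by rw [← Real.norm_eq_abs]; exact norm_le_pi_norm _ i0)) (hC _ hmem)
    have hval : φ (t • w') i0 = a i0 * Real.exp (Real.log (C / a i0) + 1) := by
      simp only [hφdef, Pi.smul_apply, smul_eq_mul, htdef]
      rw [div_mul_cancel₀ _ hw'pos.ne']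
    rw [hval] at hub
    have hgt : C < a i0 * Real.exp (Real.log (C / a i0) + 1) := by
      have h1 : C / a i0 < Real.exp (Real.log (C / a i0) + 1) := by
        calc C / a i0 = Real.exp (Real.log (C / a i0)) := by
              rw [Real.exp_log (div_pos hC0 (ha i0))]
          _ < Real.exp (Real.log (C / a i0) + 1) :=
              Real.exp_lt_exp.mpr (lt_add_one _)
      calc C = a i0 * (C / a i0) := by
              rw [eq_comm, mul_comm, div_mul_cancel₀ _ (ha i0).ne']
        _ < a i0 * Real.exp (Real.log (C / a i0) + 1) := by
            exact mul_lt_mul_of_pos_left h1 (ha i0)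
    linarith
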